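/- For all t > 0 with t ≠ 1, the derivative of t ↦ (4t/3 − t·F2(1/t)) equals t·F1'(1/t), where F2(s) = ((3s^4 - 2s^2 - 1)/(8s^3))·ln|(s+1)/(s-1)| + 1/(4s^2) + 7/12 and F1'(s) = ((s^2+1)/(2s^2))·ln|(s+1)/(s-1)| - 1/s. -/

import Mathlib

noncomputable def F2 (s : ℝ) : ℝ :=
  ((3*s^4 - 2*s^2 - 1)/(8*s^3)) * Real.log |(s+1)/(s-1)| + 1/(4*s^2) + 7/12

noncomputable def F1' (s : ℝ) : ℝ :=
  ((s^2 + 1)/(2*s^2)) * Real.log |(s+1)/(s-1)| - 1/s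

lemma log_abs_inv_eq (x : ℝ) (hx0 : x ≠ 0) (hxp : x + 1 ≠ 0) (hxm : x - 1 ≠ 0) :
    Real.log |(1/x+1)/(1/x-1)| = Real.log (x+1) - Real.log (x-1) := by
  have e1 : (1:ℝ)/x + 1 = (x+1)/x := by field_simp; ring
  have e2 : (1:ℝ)/x - 1 = -((x-1)/x) := by field_simp; ring
  have h1 : (1:ℝ)/x + 1 ≠ 0 := by rw [e1]; exact div_ne_zero hxp hx0
  have h2 : (1:ℝ)/x - 1 ≠ 0 := by
    rw [e2]; simpa using div_ne_zero hxm hx0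
  rw [Real.log_abs, Real.log_div h1 h2, e1, e2, Real.log_neg_eq_log,
    Real.log_div hxp hx0, Real.log_div hxm hx0]
  ring

theorem stmt_10 (t : ℝ) (ht : 0 < t) (ht1 : t ≠ 1) :
    HasDerivAt (fun t => 4*t/3 - t * F2 (1/t)) (t * F1' (1/t)) t := by
  have ht0 : t ≠ 0 := ne_of_gt ht
  have htp : t + 1 ≠ 0 := by positivity
  have htm : t - 1 ≠ 0 := sub_ne_zero.mpr ht1
  -- derivative of the explicit form
  have hL1 : HasDerivAt (fun x : ℝ => Real.log (x+1)) ((t+1)⁻¹) t := by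
    have h := (Real.hasDerivAt_log htp).comp t ((hasDerivAt_id t).add_const 1)
    simpa [Function.comp_def] using h
  have hL2 : HasDerivAt (fun x : ℝ => Real.log (x-1)) ((t-1)⁻¹) t := by
    have h := (Real.hasDerivAt_log htm).comp t ((hasDerivAt_id t).sub_const 1)
    simpa [Function.comp_def] using h
  have hpoly : HasDerivAt (fun x : ℝ => (x^4+2*x^2-3)/8) ((4*t^3+2*(2*t))/8) t := by
    have h := (((hasDerivAt_pow 4 t).add ((hasDerivAt_pow 2 t).const_mul 2)).sub_const 3).div_const 8
    refine h.congr_deriv ?_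
    push_cast; ring
  have hg : HasDerivAt
      (fun x : ℝ => 3*x/4 - x^3/4 + (x^4+2*x^2-3)/8 * (Real.log (x+1) - Real.log (x-1)))
      ((3/4 - 3*t^2/4) + (((4*t^3+2*(2*t))/8) * (Real.log (t+1) - Real.log (t-1))
        + (t^4+2*t^2-3)/8 * ((t+1)⁻¹ - (t-1)⁻¹))) t := by
    have hcube : HasDerivAt (fun x : ℝ => 3*x/4 - x^3/4) (3/4 - 3*t^2/4) t := by
      have h := (((hasDerivAt_id t).const_mul 3).div_const 4).sub
        ((hasDerivAt_pow 3 t).div_const 4)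
      refine h.congr_deriv ?_
      push_cast; ring
    exact hcube.add (hpoly.mul (hL1.sub hL2))
  -- eventual equality with original function
  have hopen : IsOpen {x : ℝ | x ≠ 0 ∧ x + 1 ≠ 0 ∧ x - 1 ≠ 0} := by
    have : {x : ℝ | x ≠ 0 ∧ x + 1 ≠ 0 ∧ x - 1 ≠ 0}
        = ({0}ᶜ ∩ ({-1}ᶜ ∩ {1}ᶜ) : Set ℝ) := by
      ext x
      constructor
      · rintro ⟨h1, h2, h3⟩
        refine ⟨h1, fun h => h2 (by simp at h; rw [h]; ring), fun h => h3 (by simp at h; rw [h]; ring)⟩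
      · rintro ⟨h1, h2, h3⟩
        refine ⟨h1, fun h => h2 (by simp; linarith), fun h => h3 (by simp; linarith)⟩
    rw [this]
    exact isOpen_compl_singleton.inter (isOpen_compl_singleton.inter isOpen_compl_singleton)
  have hmem : t ∈ {x : ℝ | x ≠ 0 ∧ x + 1 ≠ 0 ∧ x - 1 ≠ 0} := ⟨ht0, htp, htm⟩
  have heq : (fun x : ℝ => 3*x/4 - x^3/4 + (x^4+2*x^2-3)/8 * (Real.log (x+1) - Real.log (x-1)))
      =ᶠ[nhds t] (fun x => 4*x/3 - x * F2 (1/x)) := by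
    filter_upwards [hopen.mem_nhds hmem] with x hx
    obtain ⟨hx0, hxp, hxm⟩ := hx
    unfold F2
    rw [log_abs_inv_eq x hx0 hxp hxm]
    field_simp
    ring
  have := hg.congr_of_eventuallyEq heq.symm
  refine this.congr_deriv ?_
  unfold F1'
  rw [log_abs_inv_eq t ht0 htp htm]
  field_simp
  ring
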